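/- (Eigenvalues of periodic truncations.) Let (α,λ) be q-periodic with q even, |α_n| < 1, |λ_n| = 1, let n ∈ ℤ₊ and N = nq. Let ℰ^{per}_N = ℒ^{per}·ℳ^{per} be the unitary operator on ℂ^{ℤ/Nℤ} obtained by imposing periodic boundary conditions: ℒ^{per} is the direct sum of the 2×2 blocks Θ(α_{2j},λ_{2j}) = λ_{2j}·[[conj(α_{2j}), ρ_{2j}],[ρ_{2j}, −α_{2j}]] acting on the coordinates {2j mod N, 2j+1 mod N} for 0 ≤ j < N/2, and ℳ^{per} is the direct sum of the blocks Θ(α_{2j+1},λ_{2j+1}) acting on the coordinates {2j+1 mod N, 2j+2 mod N} for 0 ≤ j < N/2. Then w ∈ ℂ∖{0} is an eigenvalue of ℰ^{per}_N if and only if 1 is an eigenvalue of Φ(w)ⁿ, where Φ(w) = Z(q,0;w) is the monodromy matrix; equivalently, if and only if Δ(w) = 2·cos(2πj/n) for some integer 0 ≤ j ≤ n/2. -/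

import Mathlib

noncomputable section
open scoped ENNReal
open Complex Matrix

/-- ρ = √(1 − |α|²). -/
def rho (w : ℂ) : ℝ := Real.sqrt (1 - ‖w‖ ^ 2)

/-- The Gesztesy–Zinchenko transfer matrix P(α, λ; z). -/
def Pmat (α lam z : ℂ) : Matrix (Fin 2) (Fin 2) ℂ :=
  ((rho α : ℂ))⁻¹ • !![-((starRingEnd ℂ) α), lam⁻¹; lam, -α]

/-- The Gesztesy–Zinchenko transfer matrix Q(α, λ; z). -/
def Qmat (α lam z : ℂ) : Matrix (Fin 2) (Fin 2) ℂ :=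
  ((rho α : ℂ))⁻¹ • !![-α, lam * z⁻¹; lam⁻¹ * z, -((starRingEnd ℂ) α)]

/-- Y(n; z): the one-step transfer matrix. -/
def Ymat (a lam : ℤ → ℂ) (z : ℂ) (n : ℤ) : Matrix (Fin 2) (Fin 2) ℂ :=
  if Odd n then Pmat (a n) (lam n) z else Qmat (a n) (lam n) z

/-- Z(n, 0; z) = Y(n−1; z) ⋯ Y(0; z). -/
def Zmat (a lam : ℤ → ℂ) (z : ℂ) : ℕ → Matrix (Fin 2) (Fin 2) ℂ
  | 0 => 1
  | n + 1 => Ymat a lam z n * Zmat a lam z n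

/-- Frobenius (Hilbert–Schmidt) norm of a 2×2 complex matrix. -/
def matNorm (M : Matrix (Fin 2) (Fin 2) ℂ) : ℝ :=
  Real.sqrt (∑ i, ∑ j, ‖M i j‖ ^ 2)

/-- The group SU(1,1) of 2×2 complex matrices. -/
def SU11 : Set (Matrix (Fin 2) (Fin 2) ℂ) :=
  {M | M.det = 1 ∧ Mᴴ * !![1, 0; 0, -1] * M = !![1, 0; 0, -1]}

/-- The rotation matrix R_θ = diag(e^{iθ}, e^{−iθ}). -/
def Rtheta (θ : ℝ) : Matrix (Fin 2) (Fin 2) ℂ :=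
  !![Complex.exp (θ * Complex.I), 0; 0, Complex.exp (-θ * Complex.I)]

/-- 𝕂: the diagonal subgroup of SU(1,1). -/
def Kset : Set (Matrix (Fin 2) (Fin 2) ℂ) := {R | ∃ θ : ℝ, R = Rtheta θ}

/-- The iTrace of a 2×2 complex matrix. -/
def iTr (M : Matrix (Fin 2) (Fin 2) ℂ) : ℂ := (M 0 0 - M 1 1) / (2 * Complex.I)

/-- M_ξ, the standard SU(1,1) element moving 0 to ξ. -/
def Mxi (ξ : ℂ) : Matrix (Fin 2) (Fin 2) ℂ :=
  ((Real.sqrt (1 - ‖ξ‖ ^ 2) : ℂ))⁻¹ • !![1, ξ; (starRingEnd ℂ) ξ, 1]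

/-- ℒ^per: the direct sum of the blocks Θ(α_{2j}, λ_{2j}) acting on coordinates
{2j mod N, 2j+1 mod N} of ℂ^{ℤ/Nℤ}, 0 ≤ j < N/2. -/
def LperMat (a lam : ℤ → ℂ) (N : ℕ) : Matrix (ZMod N) (ZMod N) ℂ :=
  ∑ j ∈ Finset.range (N / 2),
    ((lam (2 * j) * (starRingEnd ℂ) (a (2 * j))) •
        Matrix.single ((2 * j : ℕ) : ZMod N) ((2 * j : ℕ) : ZMod N) 1 +
      (lam (2 * j) * (rho (a (2 * j)) : ℂ)) •
        Matrix.single ((2 * j : ℕ) : ZMod N) ((2 * j + 1 : ℕ) : ZMod N) 1 +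
      (lam (2 * j) * (rho (a (2 * j)) : ℂ)) •
        Matrix.single ((2 * j + 1 : ℕ) : ZMod N) ((2 * j : ℕ) : ZMod N) 1 +
      (-(lam (2 * j) * a (2 * j))) •
        Matrix.single ((2 * j + 1 : ℕ) : ZMod N) ((2 * j + 1 : ℕ) : ZMod N) 1)

/-- ℳ^per: the direct sum of the blocks Θ(α_{2j+1}, λ_{2j+1}) acting on coordinates
{2j+1 mod N, 2j+2 mod N} of ℂ^{ℤ/Nℤ}, 0 ≤ j < N/2. -/
def MperMat (a lam : ℤ → ℂ) (N : ℕ) : Matrix (ZMod N) (ZMod N) ℂ :=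
  ∑ j ∈ Finset.range (N / 2),
    ((lam (2 * j + 1) * (starRingEnd ℂ) (a (2 * j + 1))) •
        Matrix.single ((2 * j + 1 : ℕ) : ZMod N) ((2 * j + 1 : ℕ) : ZMod N) 1 +
      (lam (2 * j + 1) * (rho (a (2 * j + 1)) : ℂ)) •
        Matrix.single ((2 * j + 1 : ℕ) : ZMod N) ((2 * j + 2 : ℕ) : ZMod N) 1 +
      (lam (2 * j + 1) * (rho (a (2 * j + 1)) : ℂ)) •
        Matrix.single ((2 * j + 2 : ℕ) : ZMod N) ((2 * j + 1 : ℕ) : ZMod N) 1 +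
      (-(lam (2 * j + 1) * a (2 * j + 1))) •
        Matrix.single ((2 * j + 2 : ℕ) : ZMod N) ((2 * j + 2 : ℕ) : ZMod N) 1)

/-- ℰ^per_N = ℒ^per · ℳ^per, the truncation of ℰ to ℂ^{ℤ/Nℤ} with periodic boundary
conditions. -/
def EperMat (a lam : ℤ → ℂ) (N : ℕ) [NeZero N] : Matrix (ZMod N) (ZMod N) ℂ :=
  LperMat a lam N * MperMat a lam N

-- ===== auxiliary lemmas =====


lemma rho_pos {α : ℂ} (h : ‖α‖ < 1) : 0 < rho α := by
  apply Real.sqrt_pos.mpr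
  have : ‖α‖ ^ 2 < 1 := by nlinarith [norm_nonneg α]
  linarith

lemma rho_sq {α : ℂ} (h : ‖α‖ < 1) :
    ((rho α : ℂ)) * (rho α : ℂ) = 1 - α * (starRingEnd ℂ) α := by
  have h0 : (0:ℝ) ≤ 1 - ‖α‖ ^ 2 := by nlinarith [norm_nonneg α]
  have : (rho α) * (rho α) = 1 - ‖α‖ ^ 2 := Real.mul_self_sqrt h0
  calc ((rho α : ℂ)) * (rho α : ℂ) = ((rho α * rho α : ℝ) : ℂ) := by push_cast; ring
    _ = ((1 - ‖α‖ ^ 2 : ℝ) : ℂ) := by rw [this]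
    _ = 1 - α * (starRingEnd ℂ) α := by
        rw [Complex.mul_conj, Complex.normSq_eq_norm_sq]
        push_cast; ring

lemma mem_spectrum_matrix {n : Type*} [Fintype n] [DecidableEq n] (M : Matrix n n ℂ) (w : ℂ) :
    w ∈ spectrum ℂ M ↔ ∃ u ≠ 0, M.mulVec u = w • u := by
  rw [spectrum.mem_iff]
  rw [Matrix.isUnit_iff_isUnit_det, isUnit_iff_ne_zero, not_not,
    ← Matrix.exists_mulVec_eq_zero_iff]
  constructor
  · rintro ⟨v, hv, hmv⟩
    refine ⟨v, hv, ?_⟩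
    have := hmv
    rw [Matrix.sub_mulVec] at this
    have halg : (algebraMap ℂ (Matrix n n ℂ) w).mulVec v = w • v := by
      simp [Matrix.algebraMap_eq_diagonal, Matrix.diagonal_mulVec_single]
      ext i
      simp [Matrix.mulVec, dotProduct, Matrix.diagonal, Finset.sum_ite_eq, Pi.algebraMap_apply]
    rw [halg, sub_eq_zero] at this
    exact this.symm
  · rintro ⟨v, hv, hmv⟩
    refine ⟨v, hv, ?_⟩
    rw [Matrix.sub_mulVec]
    have halg : (algebraMap ℂ (Matrix n n ℂ) w).mulVec v = w • v := by
      simp [Matrix.algebraMap_eq_diagonal, Matrix.diagonal_mulVec_single]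
      ext i
      simp [Matrix.mulVec, dotProduct, Matrix.diagonal, Finset.sum_ite_eq, Pi.algebraMap_apply]
    rw [halg, hmv, sub_self]


section per
variable (q : ℕ) (a lam : ℤ → ℂ) (z : ℂ)

lemma Ymat_per (hq : Even q) (hper : ∀ m : ℤ, a (m + q) = a m ∧ lam (m + q) = lam m)
    (m : ℤ) : Ymat a lam z (m + q) = Ymat a lam z m := by
  have hEq : Even (q : ℤ) := hq.natCast  -- maybe Int.even_coe_nat
  have hodd : Odd (m + q) ↔ Odd m := by
    constructor
    · intro h
      rcases Int.even_or_odd m with he | ho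
      · exact absurd h (Int.not_odd_iff_even.mpr (he.add hEq))
      · exact ho
    · intro h
      exact h.add_even hEq
  unfold Ymat
  rw [(hper m).1, (hper m).2]
  by_cases h : Odd m
  · rw [if_pos (hodd.mpr h), if_pos h]
  · rw [if_neg (fun hh => h (hodd.mp hh)), if_neg h]

lemma Zmat_add_q (hq : Even q) (hper : ∀ m : ℤ, a (m + q) = a m ∧ lam (m + q) = lam m)
    (m : ℕ) : Zmat a lam z (q + m) = Zmat a lam z m * Zmat a lam z q := by
  induction m with
  | zero => simp [Zmat]
  | succ m ih =>
      have : q + (m + 1) = (q + m) + 1 := by ring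
      rw [this]
      show Ymat a lam z ((q + m : ℕ) : ℤ) * Zmat a lam z (q + m) = _
      have hc : ((q + m : ℕ) : ℤ) = (m : ℤ) + q := by push_cast; ring
      rw [hc, Ymat_per q a lam z hq hper, ih]
      show _ = Ymat a lam z m * Zmat a lam z m * Zmat a lam z q
      rw [mul_assoc]

lemma Zmat_mul_q (hq : Even q) (hper : ∀ m : ℤ, a (m + q) = a m ∧ lam (m + q) = lam m)
    (n : ℕ) : Zmat a lam z (n * q) = (Zmat a lam z q) ^ n := by
  induction n with
  | zero => simp [Zmat]
  | succ n ih =>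
      have : (n + 1) * q = q + n * q := by ring
      rw [this, Zmat_add_q q a lam z hq hper, ih, pow_succ]

lemma det_Ymat (ha : ∀ m, ‖a m‖ < 1) (hl : ∀ m, ‖lam m‖ = 1)
    (hz : z ≠ 0) (m : ℤ) : (Ymat a lam z m).det = -1 := by
  have hρ : ((rho (a m) : ℂ)) ≠ 0 := by
    exact_mod_cast (rho_pos (ha m)).ne'
  have hρ2 := rho_sq (ha m)
  have hlm : lam m ≠ 0 := by
    intro h; have := hl m; rw [h] at this; simp at this
  unfold Ymat Pmat Qmat
  split
  · rw [Matrix.det_smul, Matrix.det_fin_two_of]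
    simp only [Fintype.card_fin]
    field_simp
    linear_combination hρ2
  · rw [Matrix.det_smul, Matrix.det_fin_two_of]
    simp only [Fintype.card_fin]
    field_simp
    linear_combination hρ2

lemma det_Zmat (ha : ∀ m, ‖a m‖ < 1) (hl : ∀ m, ‖lam m‖ = 1)
    (hz : z ≠ 0) (m : ℕ) : (Zmat a lam z m).det = (-1) ^ m := by
  induction m with
  | zero => simp [Zmat]
  | succ m ih =>
      show ((Ymat a lam z m * Zmat a lam z m)).det = _
      rw [Matrix.det_mul, ih, det_Ymat a lam z ha hl hz, pow_succ]
      ring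

end per


lemma zc_inj {N i j : ℕ} (hi : i < N) (hj : j < N) (h : (i : ZMod N) = (j : ZMod N)) :
    i = j := by
  rw [ZMod.natCast_eq_natCast_iff, Nat.ModEq, Nat.mod_eq_of_lt hi, Nat.mod_eq_of_lt hj] at h
  exact h

lemma zc_ne_par {N : ℕ} (hN2 : 2 ∣ N) {i j : ℕ} (h : i % 2 ≠ j % 2) :
    (i : ZMod N) ≠ (j : ZMod N) := by
  intro hc
  rw [ZMod.natCast_eq_natCast_iff] at hc
  exact h (hc.of_dvd hN2)

lemma sum_mulVec {n : Type*} [Fintype n] {ι : Type*} (s : Finset ι)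
    (f : ι → Matrix n n ℂ) (v : n → ℂ) :
    (∑ i ∈ s, f i).mulVec v = ∑ i ∈ s, (f i).mulVec v := by
  ext k
  simp only [Matrix.mulVec, dotProduct, Finset.sum_apply, Matrix.sum_apply,
    Finset.sum_mul]
  exact Finset.sum_comm

lemma block_mulVec_apply {N : ℕ} [NeZero N] (c0 c1 c2 c3 : ℂ) (i0 i1 : ZMod N)
    (v : ZMod N → ℂ) (k : ZMod N) :
    (c0 • Matrix.single i0 i0 (1:ℂ) + c1 • Matrix.single i0 i1 1 +
      c2 • Matrix.single i1 i0 1 + c3 • Matrix.single i1 i1 1).mulVec v k =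
    (if k = i0 then c0 * v i0 + c1 * v i1 else 0) +
      (if k = i1 then c2 * v i0 + c3 * v i1 else 0) := by
  simp only [Matrix.add_mulVec, Matrix.smul_mulVec, Matrix.single_mulVec,
    Pi.add_apply, Pi.smul_apply, Function.update_apply, Pi.zero_apply, smul_eq_mul, one_mul]
  split_ifs <;> ring

section eval
variable {N : ℕ} [NeZero N] (a lam : ℤ → ℂ) (hN2 : 2 ∣ N)

include hN2 in
lemma two_mul_lt {j : ℕ} (hj : j < N / 2) : 2 * j + 1 < N := by
  obtain ⟨s, rfl⟩ := hN2; omega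

lemma L_mulVec_apply (v : ZMod N → ℂ) (k : ZMod N) :
    (LperMat a lam N).mulVec v k =
    ∑ j ∈ Finset.range (N / 2),
      ((if k = ((2 * j : ℕ) : ZMod N) then
          lam (2 * j) * (starRingEnd ℂ) (a (2 * j)) * v ((2 * j : ℕ) : ZMod N) +
            lam (2 * j) * (rho (a (2 * j)) : ℂ) * v ((2 * j + 1 : ℕ) : ZMod N) else 0) +
        (if k = ((2 * j + 1 : ℕ) : ZMod N) then
          lam (2 * j) * (rho (a (2 * j)) : ℂ) * v ((2 * j : ℕ) : ZMod N) +
            (-(lam (2 * j) * a (2 * j))) * v ((2 * j + 1 : ℕ) : ZMod N) else 0)) := by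
  unfold LperMat
  rw [_root_.sum_mulVec, Finset.sum_apply]
  exact Finset.sum_congr rfl fun j _ => block_mulVec_apply _ _ _ _ _ _ _ _

lemma M_mulVec_apply (v : ZMod N → ℂ) (k : ZMod N) :
    (MperMat a lam N).mulVec v k =
    ∑ j ∈ Finset.range (N / 2),
      ((if k = ((2 * j + 1 : ℕ) : ZMod N) then
          lam (2 * j + 1) * (starRingEnd ℂ) (a (2 * j + 1)) * v ((2 * j + 1 : ℕ) : ZMod N) +
            lam (2 * j + 1) * (rho (a (2 * j + 1)) : ℂ) * v ((2 * j + 2 : ℕ) : ZMod N) else 0) +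
        (if k = ((2 * j + 2 : ℕ) : ZMod N) then
          lam (2 * j + 1) * (rho (a (2 * j + 1)) : ℂ) * v ((2 * j + 1 : ℕ) : ZMod N) +
            (-(lam (2 * j + 1) * a (2 * j + 1))) * v ((2 * j + 2 : ℕ) : ZMod N) else 0)) := by
  unfold MperMat
  rw [_root_.sum_mulVec, Finset.sum_apply]
  exact Finset.sum_congr rfl fun j _ => block_mulVec_apply _ _ _ _ _ _ _ _

include hN2 in
lemma L_apply0 (v : ZMod N → ℂ) {j : ℕ} (hj : j < N / 2) :
    (LperMat a lam N).mulVec v ((2 * j : ℕ) : ZMod N) =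
    lam (2 * j) * (starRingEnd ℂ) (a (2 * j)) * v ((2 * j : ℕ) : ZMod N) +
      lam (2 * j) * (rho (a (2 * j)) : ℂ) * v ((2 * j + 1 : ℕ) : ZMod N) := by
  rw [L_mulVec_apply]
  rw [Finset.sum_eq_single_of_mem j (Finset.mem_range.mpr hj)]
  · have h1 : ((2 * j : ℕ) : ZMod N) ≠ ((2 * j + 1 : ℕ) : ZMod N) :=
      zc_ne_par hN2 (by omega)
    rw [if_pos rfl, if_neg h1, add_zero]
  · intro j' hj' hne
    rw [Finset.mem_range] at hj'
    have h1 : ((2 * j : ℕ) : ZMod N) ≠ ((2 * j' + 1 : ℕ) : ZMod N) :=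
      zc_ne_par hN2 (by omega)
    have h0 : ((2 * j : ℕ) : ZMod N) ≠ ((2 * j' : ℕ) : ZMod N) := by
      intro hc
      have := zc_inj (by have := two_mul_lt hN2 hj; omega) (by have := two_mul_lt hN2 hj'; omega) hc
      omega
    rw [if_neg h0, if_neg h1, add_zero]

include hN2 in
lemma L_apply1 (v : ZMod N → ℂ) {j : ℕ} (hj : j < N / 2) :
    (LperMat a lam N).mulVec v ((2 * j + 1 : ℕ) : ZMod N) =
    lam (2 * j) * (rho (a (2 * j)) : ℂ) * v ((2 * j : ℕ) : ZMod N) +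
      (-(lam (2 * j) * a (2 * j))) * v ((2 * j + 1 : ℕ) : ZMod N) := by
  rw [L_mulVec_apply]
  rw [Finset.sum_eq_single_of_mem j (Finset.mem_range.mpr hj)]
  · have h1 : ((2 * j + 1 : ℕ) : ZMod N) ≠ ((2 * j : ℕ) : ZMod N) :=
      zc_ne_par hN2 (by omega)
    rw [if_neg h1, if_pos rfl, zero_add]
  · intro j' hj' hne
    rw [Finset.mem_range] at hj'
    have h0 : ((2 * j + 1 : ℕ) : ZMod N) ≠ ((2 * j' : ℕ) : ZMod N) :=
      zc_ne_par hN2 (by omega)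
    have h1 : ((2 * j + 1 : ℕ) : ZMod N) ≠ ((2 * j' + 1 : ℕ) : ZMod N) := by
      intro hc
      have := zc_inj (two_mul_lt hN2 hj) (two_mul_lt hN2 hj') hc
      omega
    rw [if_neg h0, if_neg h1, add_zero]

include hN2 in
lemma M_apply1 (u : ZMod N → ℂ) {j : ℕ} (hj : j < N / 2) :
    (MperMat a lam N).mulVec u ((2 * j + 1 : ℕ) : ZMod N) =
    lam (2 * j + 1) * (starRingEnd ℂ) (a (2 * j + 1)) * u ((2 * j + 1 : ℕ) : ZMod N) +
      lam (2 * j + 1) * (rho (a (2 * j + 1)) : ℂ) * u ((2 * j + 2 : ℕ) : ZMod N) := by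
  rw [M_mulVec_apply]
  rw [Finset.sum_eq_single_of_mem j (Finset.mem_range.mpr hj)]
  · have h1 : ((2 * j + 1 : ℕ) : ZMod N) ≠ ((2 * j + 2 : ℕ) : ZMod N) :=
      zc_ne_par hN2 (by omega)
    rw [if_pos rfl, if_neg h1, add_zero]
  · intro j' hj' hne
    rw [Finset.mem_range] at hj'
    have h1 : ((2 * j + 1 : ℕ) : ZMod N) ≠ ((2 * j' + 2 : ℕ) : ZMod N) :=
      zc_ne_par hN2 (by omega)
    have h0 : ((2 * j + 1 : ℕ) : ZMod N) ≠ ((2 * j' + 1 : ℕ) : ZMod N) := by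
      intro hc
      have := zc_inj (two_mul_lt hN2 hj) (two_mul_lt hN2 hj') hc
      omega
    rw [if_neg h0, if_neg h1, add_zero]

include hN2 in
lemma M_apply2 (u : ZMod N → ℂ) {j : ℕ} (hj : j < N / 2) :
    (MperMat a lam N).mulVec u ((2 * j + 2 : ℕ) : ZMod N) =
    lam (2 * j + 1) * (rho (a (2 * j + 1)) : ℂ) * u ((2 * j + 1 : ℕ) : ZMod N) +
      (-(lam (2 * j + 1) * a (2 * j + 1))) * u ((2 * j + 2 : ℕ) : ZMod N) := by
  rw [M_mulVec_apply]
  rw [Finset.sum_eq_single_of_mem j (Finset.mem_range.mpr hj)]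
  · have h1 : ((2 * j + 2 : ℕ) : ZMod N) ≠ ((2 * j + 1 : ℕ) : ZMod N) :=
      zc_ne_par hN2 (by omega)
    rw [if_neg h1, if_pos rfl, zero_add]
  · intro j' hj' hne
    rw [Finset.mem_range] at hj'
    have h0 : ((2 * j + 2 : ℕ) : ZMod N) ≠ ((2 * j' + 1 : ℕ) : ZMod N) :=
      zc_ne_par hN2 (by omega)
    have h1 : ((2 * j + 2 : ℕ) : ZMod N) ≠ ((2 * j' + 2 : ℕ) : ZMod N) := by
      intro hc
      have hc' : ((2 * j : ℕ) : ZMod N) + 2 = ((2 * j' : ℕ) : ZMod N) + 2 := by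
        push_cast at hc ⊢
        exact hc
      have hc'' : ((2 * j : ℕ) : ZMod N) = ((2 * j' : ℕ) : ZMod N) := add_right_cancel hc'
      have := zc_inj (by have := two_mul_lt hN2 hj; omega)
        (by have := two_mul_lt hN2 hj'; omega) hc''
      omega
    rw [if_neg h0, if_neg h1, add_zero]

end eval


lemma Qmat_mulVec (α lam z : ℂ) (x : Fin 2 → ℂ) :
    (Qmat α lam z).mulVec x =
    ![((rho α : ℂ))⁻¹ * (-α * x 0 + lam * z⁻¹ * x 1),
      ((rho α : ℂ))⁻¹ * (lam⁻¹ * z * x 0 - (starRingEnd ℂ) α * x 1)] := by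
  funext i
  fin_cases i <;>
    simp [Qmat, Matrix.mulVec, dotProduct, Fin.sum_univ_two] <;> ring

lemma Pmat_mulVec (α lam z : ℂ) (x : Fin 2 → ℂ) :
    (Pmat α lam z).mulVec x =
    ![((rho α : ℂ))⁻¹ * (-((starRingEnd ℂ) α) * x 0 + lam⁻¹ * x 1),
      ((rho α : ℂ))⁻¹ * (lam * x 0 - α * x 1)] := by
  funext i
  fin_cases i <;>
    simp [Pmat, Matrix.mulVec, dotProduct, Fin.sum_univ_two] <;> ring

lemma Qstep_iff {α lam w u0 v0 u1 v1 : ℂ} (hα : ‖α‖ < 1)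
    (hlam : lam ≠ 0) (hw : w ≠ 0) :
    (u1 = ((rho α : ℂ))⁻¹ * (-α * u0 + lam * w⁻¹ * v0) ∧
      v1 = ((rho α : ℂ))⁻¹ * (lam⁻¹ * w * u0 - (starRingEnd ℂ) α * v0)) ↔
    (lam * (starRingEnd ℂ) α * v0 + lam * (rho α : ℂ) * v1 = w * u0 ∧
      lam * (rho α : ℂ) * v0 - lam * α * v1 = w * u1) := by
  have hρ : ((rho α : ℂ)) ≠ 0 := by exact_mod_cast (rho_pos hα).ne'
  set ρ : ℂ := ((rho α : ℂ)) with hρdef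
  set b : ℂ := (starRingEnd ℂ) α with hbdef
  have Hρ2 : ρ * ρ = 1 - α * b := rho_sq hα
  have Hρi : ρ * ρ⁻¹ = 1 := mul_inv_cancel₀ hρ
  have Hl : lam * lam⁻¹ = 1 := mul_inv_cancel₀ hlam
  have Hw : w * w⁻¹ = 1 := mul_inv_cancel₀ hw
  constructor
  · rintro ⟨h1, h2⟩
    constructor
    · linear_combination (lam * ρ) * h2 + (lam * (lam⁻¹ * w * u0 - b * v0)) * Hρi +
        (w * u0) * Hl
    · linear_combination (-(lam * α * ρ⁻¹ * ρ)) * h2 + (-(w * ρ⁻¹ * ρ)) * h1 +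
        ((-(lam * α * ρ⁻¹)) * (lam⁻¹ * w * u0 - b * v0) +
          (w * ρ⁻¹) * (α * u0 - lam * w⁻¹ * v0) + (lam * α * v1 + w * u1) - lam * ρ * v0) * Hρi +
        (-(α * ρ⁻¹ * w * u0)) * Hl + (-(lam * ρ⁻¹ * v0)) * Hw + (lam * ρ⁻¹ * v0) * Hρ2
  · rintro ⟨h1, h2⟩
    constructor
    · linear_combination (ρ⁻¹ * (-α * w⁻¹)) * h1 + (ρ⁻¹ * (-ρ * w⁻¹)) * h2 +
        (ρ⁻¹ * w⁻¹ * lam * v0) * Hρ2 + (ρ⁻¹ * (-α * u0 - ρ * u1)) * Hw +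
        (ρ⁻¹ * (α * u0 - lam * w⁻¹ * v0) - (u1 + ρ⁻¹ * α * u0 - ρ⁻¹ * lam * w⁻¹ * v0)) * Hρi
    · linear_combination (ρ⁻¹ * lam⁻¹) * h1 + (ρ⁻¹ * (-b * v0 - ρ * v1)) * Hl +
        (-(ρ⁻¹ * (lam⁻¹ * w * u0 - b * v0)) -
          (v1 - ρ⁻¹ * (lam⁻¹ * w * u0 - b * v0))) * Hρi

lemma Pstep_iff {α lam u1 v1 u2 v2 : ℂ} (hα : ‖α‖ < 1) (hlam : lam ≠ 0) :
    (u2 = ((rho α : ℂ))⁻¹ * (-((starRingEnd ℂ) α) * u1 + lam⁻¹ * v1) ∧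
      v2 = ((rho α : ℂ))⁻¹ * (lam * u1 - α * v1)) ↔
    (lam * (starRingEnd ℂ) α * u1 + lam * (rho α : ℂ) * u2 = v1 ∧
      lam * (rho α : ℂ) * u1 - lam * α * u2 = v2) := by
  have hρ : ((rho α : ℂ)) ≠ 0 := by exact_mod_cast (rho_pos hα).ne'
  set ρ : ℂ := ((rho α : ℂ)) with hρdef
  set b : ℂ := (starRingEnd ℂ) α with hbdef
  have Hρ2 : ρ * ρ = 1 - α * b := rho_sq hα
  have Hρi : ρ * ρ⁻¹ = 1 := mul_inv_cancel₀ hρ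
  have Hl : lam * lam⁻¹ = 1 := mul_inv_cancel₀ hlam
  constructor
  · rintro ⟨hA, hB⟩
    constructor
    · linear_combination (lam * ρ) * hA + (lam * (-b * u1 + lam⁻¹ * v1)) * Hρi + v1 * Hl
    · linear_combination (-(lam * α * ρ⁻¹ * ρ)) * hA + (-(ρ⁻¹ * ρ)) * hB +
        ((-(lam * α * ρ⁻¹)) * (-b * u1 + lam⁻¹ * v1) + (-ρ⁻¹) * (lam * u1 - α * v1) +
          (lam * α * u2 + v2) - lam * ρ * u1) * Hρi +
        (lam * ρ⁻¹ * u1) * Hρ2 + (-(α * ρ⁻¹ * v1)) * Hl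
  · rintro ⟨h0, h1⟩
    constructor
    · linear_combination (ρ⁻¹ * lam⁻¹) * h0 + (ρ⁻¹ * (-b * u1 - ρ * u2)) * Hl +
        (-(ρ⁻¹ * (-b * u1 + lam⁻¹ * v1)) -
          (u2 - ρ⁻¹ * (-b * u1 + lam⁻¹ * v1))) * Hρi
    · linear_combination (ρ⁻¹ * (-α)) * h0 + (ρ⁻¹ * (-ρ)) * h1 + (ρ⁻¹ * lam * u1) * Hρ2 +
        (-(ρ⁻¹ * (lam * u1 - α * v1)) - (v2 - ρ⁻¹ * (lam * u1 - α * v1))) * Hρi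


lemma two_cos_exp (θ : ℝ) :
    ((2 * Real.cos θ : ℝ) : ℂ) * Complex.exp ((θ : ℂ) * Complex.I) =
      Complex.exp ((θ : ℂ) * Complex.I) ^ 2 + 1 := by
  have h2c := Complex.two_cos (x := (θ : ℂ))
  have hone : Complex.exp (-(θ : ℂ) * Complex.I) * Complex.exp ((θ : ℂ) * Complex.I) = 1 := by
    rw [← Complex.exp_add, show -(θ : ℂ) * Complex.I + (θ : ℂ) * Complex.I = 0 from by ring,
      Complex.exp_zero]
  push_cast
  linear_combination Complex.exp ((θ : ℂ) * Complex.I) * h2c + hone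

lemma spec_pow_one_iff (Φ : Matrix (Fin 2) (Fin 2) ℂ) (hdet : Φ.det = 1) {n : ℕ} (hn : 0 < n) :
    (1 : ℂ) ∈ spectrum ℂ (Φ ^ n) ↔
      ∃ j : ℕ, 2 * j ≤ n ∧ Φ.trace = ((2 * Real.cos (2 * Real.pi * j / n) : ℝ) : ℂ) := by
  have hmem : (1 : ℂ) ∈ spectrum ℂ (Φ ^ n) ↔ (Φ ^ n - 1).det = 0 := by
    rw [spectrum.mem_iff, Matrix.isUnit_iff_isUnit_det, isUnit_iff_ne_zero, not_not,
      map_one (algebraMap ℂ (Matrix (Fin 2) (Fin 2) ℂ))]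
    have h1 : (1 : Matrix (Fin 2) (Fin 2) ℂ) - Φ ^ n = -(Φ ^ n - 1) := (neg_sub _ _).symm
    rw [h1, Matrix.det_neg]
    simp
  rw [hmem]
  have hprim := Complex.isPrimitiveRoot_exp n hn.ne'
  have hfact := Polynomial.X_pow_sub_one_eq_prod hn hprim
  have haev : Φ ^ n - 1 = Polynomial.aeval Φ ((Polynomial.X : Polynomial ℂ) ^ n - 1) := by
    simp
  have hfac : ∀ ζ : ℂ, (Polynomial.aeval Φ (Polynomial.X - Polynomial.C ζ)).det =
      ζ ^ 2 - Φ.trace * ζ + 1 := by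
    intro ζ
    have h1 : Polynomial.aeval Φ (Polynomial.X - Polynomial.C ζ) = Φ - ζ • 1 := by
      simp [Algebra.algebraMap_eq_smul_one]
    rw [h1, Matrix.det_fin_two, Matrix.trace_fin_two] at *
    simp only [Matrix.sub_apply, Matrix.smul_apply, Matrix.one_apply, smul_eq_mul]
    norm_num
    linear_combination hdet
  have hdetprod : (Φ ^ n - 1).det =
      ∏ ζ ∈ Polynomial.nthRootsFinset n (1 : ℂ), (ζ ^ 2 - Φ.trace * ζ + 1) := by
    rw [haev, hfact]
    have := map_prod ((Matrix.detMonoidHom).comp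
      ((Polynomial.aeval Φ : Polynomial ℂ →ₐ[ℂ] Matrix (Fin 2) (Fin 2) ℂ) :
        Polynomial ℂ →* Matrix (Fin 2) (Fin 2) ℂ))
      (fun ζ => (Polynomial.X : Polynomial ℂ) - Polynomial.C ζ)
      (Polynomial.nthRootsFinset n (1 : ℂ))
    simp only [MonoidHom.comp_apply, MonoidHom.coe_coe, Matrix.coe_detMonoidHom] at this
    rw [this]
    exact Finset.prod_congr rfl fun ζ _ => hfac ζ
  rw [hdetprod, Finset.prod_eq_zero_iff]
  constructor
  · rintro ⟨ζ, hζmem, hζeq⟩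
    have : NeZero n := ⟨hn.ne'⟩
    have hζn : ζ ^ n = 1 := (Polynomial.mem_nthRootsFinset hn (1 : ℂ)).mp hζmem
    obtain ⟨k, hk, rfl⟩ := hprim.eq_pow_of_pow_eq_one hζn
    have hμk : Complex.exp (2 * Real.pi * Complex.I / n) ^ k =
        Complex.exp (((2 * Real.pi * k / n : ℝ) : ℂ) * Complex.I) := by
      rw [← Complex.exp_nat_mul]
      congr 1
      have hn0 : (n : ℂ) ≠ 0 := Nat.cast_ne_zero.mpr hn.ne'
      push_cast
      field_simp
    have hζ0 : Complex.exp (2 * Real.pi * Complex.I / n) ^ k ≠ 0 :=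
      pow_ne_zero _ (Complex.exp_ne_zero _)
    have hcos := two_cos_exp (2 * Real.pi * k / n)
    rw [← hμk] at hcos
    have hΔ : Φ.trace = ((2 * Real.cos (2 * Real.pi * k / n) : ℝ) : ℂ) := by
      have hz : (Φ.trace - ((2 * Real.cos (2 * Real.pi * k / n) : ℝ) : ℂ)) *
          Complex.exp (2 * Real.pi * Complex.I / n) ^ k = 0 := by
        linear_combination -hζeq - hcos
      rcases mul_eq_zero.mp hz with h | h
      · exact sub_eq_zero.mp h
      · exact absurd h hζ0
    rcases le_or_gt (2 * k) n with hle | hlt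
    · exact ⟨k, hle, hΔ⟩
    · refine ⟨n - k, by omega, ?_⟩
      have hn0 : (n : ℝ) ≠ 0 := Nat.cast_ne_zero.mpr hn.ne'
      have hcast : ((n - k : ℕ) : ℝ) = (n : ℝ) - k := by
        push_cast [Nat.cast_sub hk.le]; ring
      have harg : 2 * Real.pi * ((n : ℝ) - k) / n = 2 * Real.pi - 2 * Real.pi * k / n := by
        field_simp
      have hcos2 : Real.cos (2 * Real.pi * ((n - k : ℕ) : ℝ) / n) =
          Real.cos (2 * Real.pi * k / n) := by
        rw [hcast, harg, Real.cos_two_pi_sub]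
      rw [hΔ, show Real.cos (2 * Real.pi * (k : ℝ) / n) =
        Real.cos (2 * Real.pi * ((n - k : ℕ) : ℝ) / n) from hcos2.symm]
  · rintro ⟨j, hjn, hΔ⟩
    refine ⟨Complex.exp (((2 * Real.pi * j / n : ℝ) : ℂ) * Complex.I), ?_, ?_⟩
    · rw [Polynomial.mem_nthRootsFinset hn, ← Complex.exp_nat_mul]
      have hn0 : (n : ℂ) ≠ 0 := Nat.cast_ne_zero.mpr hn.ne'
      have : (n : ℂ) * (((2 * Real.pi * j / n : ℝ) : ℂ) * Complex.I) =
          (j : ℤ) * (2 * Real.pi * Complex.I) := by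
        push_cast
        field_simp
      rw [this, Complex.exp_int_mul_two_pi_mul_I]
    · have hcos := two_cos_exp (2 * Real.pi * j / n)
      rw [hΔ]
      push_cast at hcos ⊢
      linear_combination -hcos

-- ===== transfer-matrix / eigenvector correspondence =====
section corr
variable {N : ℕ} [NeZero N] {a lam : ℤ → ℂ} {w : ℂ}

lemma Ymat_cast_even (a lam : ℤ → ℂ) (w : ℂ) (j : ℕ) :
    Ymat a lam w ((2 * j : ℕ) : ℤ) = Qmat (a (2 * (j : ℤ))) (lam (2 * (j : ℤ))) w := by
  have hc : ((2 * j : ℕ) : ℤ) = 2 * (j : ℤ) := by push_cast; ring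
  rw [Ymat, hc, if_neg]
  rintro ⟨k, hk⟩; omega

lemma Ymat_cast_odd (a lam : ℤ → ℂ) (w : ℂ) (j : ℕ) :
    Ymat a lam w ((2 * j + 1 : ℕ) : ℤ) =
      Pmat (a (2 * (j : ℤ) + 1)) (lam (2 * (j : ℤ) + 1)) w := by
  have hc : ((2 * j + 1 : ℕ) : ℤ) = 2 * (j : ℤ) + 1 := by push_cast; ring
  rw [Ymat, hc, if_pos ⟨(j : ℤ), by ring⟩]

lemma hlam_ne (hl : ∀ m, ‖lam m‖ = 1) (k : ℤ) : lam k ≠ 0 := by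
  intro h
  have := hl k
  rw [h] at this
  simp at this

lemma step_fwd (ha : ∀ m, ‖a m‖ < 1) (hl : ∀ m, ‖lam m‖ = 1)
    (hw : w ≠ 0) (hN2 : 2 ∣ N) (u v : ZMod N → ℂ)
    (hL : (LperMat a lam N).mulVec v = w • u)
    (hM : (MperMat a lam N).mulVec u = v)
    (m : ℕ) (hm : m < N) :
    (Ymat a lam w (m : ℤ)).mulVec ![u (m : ZMod N), v (m : ZMod N)] =
      ![u ((m + 1 : ℕ) : ZMod N), v ((m + 1 : ℕ) : ZMod N)] := by
  rcases Nat.even_or_odd m with he | ho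
  · obtain ⟨j, rfl⟩ : ∃ j, m = 2 * j := by
      obtain ⟨t, ht⟩ := he; exact ⟨t, by omega⟩
    have hj : j < N / 2 := by obtain ⟨s, rfl⟩ := hN2; omega
    have e0 := congrFun hL ((2 * j : ℕ) : ZMod N)
    rw [L_apply0 a lam hN2 v hj] at e0
    have e1 := congrFun hL ((2 * j + 1 : ℕ) : ZMod N)
    rw [L_apply1 a lam hN2 v hj] at e1
    simp only [Pi.smul_apply, smul_eq_mul] at e0 e1
    have e1' : lam (2 * (j : ℤ)) * (rho (a (2 * (j : ℤ))) : ℂ) * v ((2 * j : ℕ) : ZMod N) -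
        lam (2 * (j : ℤ)) * a (2 * (j : ℤ)) * v ((2 * j + 1 : ℕ) : ZMod N) =
        w * u ((2 * j + 1 : ℕ) : ZMod N) := by linear_combination e1
    obtain ⟨g0, g1⟩ := (Qstep_iff (ha _) (hlam_ne hl _) hw).mpr ⟨e0, e1'⟩
    rw [Ymat_cast_even, Qmat_mulVec]
    simp only [Matrix.cons_val_zero, Matrix.cons_val_one, Matrix.head_cons]
    rw [g0, g1]
  · obtain ⟨j, rfl⟩ : ∃ j, m = 2 * j + 1 := by
      obtain ⟨t, ht⟩ := ho; exact ⟨t, by omega⟩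
    have hj : j < N / 2 := by obtain ⟨s, rfl⟩ := hN2; omega
    have f0 := congrFun hM ((2 * j + 1 : ℕ) : ZMod N)
    rw [M_apply1 a lam hN2 u hj] at f0
    have f1 := congrFun hM ((2 * j + 2 : ℕ) : ZMod N)
    rw [M_apply2 a lam hN2 u hj] at f1
    have f1' : lam (2 * (j : ℤ) + 1) * (rho (a (2 * (j : ℤ) + 1)) : ℂ) *
        u ((2 * j + 1 : ℕ) : ZMod N) -
        lam (2 * (j : ℤ) + 1) * a (2 * (j : ℤ) + 1) * u ((2 * j + 2 : ℕ) : ZMod N) =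
        v ((2 * j + 2 : ℕ) : ZMod N) := by linear_combination f1
    obtain ⟨g0, g1⟩ := (Pstep_iff (ha _) (hlam_ne hl _)).mpr ⟨f0, f1'⟩
    rw [show 2 * j + 1 + 1 = 2 * j + 2 from by omega, Ymat_cast_odd, Pmat_mulVec]
    simp only [Matrix.cons_val_zero, Matrix.cons_val_one, Matrix.head_cons]
    rw [g0, g1]

lemma iter_fwd (ha : ∀ m, ‖a m‖ < 1) (hl : ∀ m, ‖lam m‖ = 1)
    (hw : w ≠ 0) (hN2 : 2 ∣ N) (u v : ZMod N → ℂ)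
    (hL : (LperMat a lam N).mulVec v = w • u)
    (hM : (MperMat a lam N).mulVec u = v) :
    ∀ m, m ≤ N → (Zmat a lam w m).mulVec ![u 0, v 0] =
      ![u (m : ZMod N), v (m : ZMod N)] := by
  intro m
  induction m with
  | zero => intro _; simp [Zmat, Matrix.one_mulVec]
  | succ m ih =>
      intro hm
      have hm' : m < N := hm
      show (Ymat a lam w (m : ℤ) * Zmat a lam w m).mulVec _ = _
      rw [← Matrix.mulVec_mulVec, ih (le_of_lt hm')]
      exact step_fwd ha hl hw hN2 u v hL hM m hm'

lemma fwd_dir (ha : ∀ m, ‖a m‖ < 1) (hl : ∀ m, ‖lam m‖ = 1)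
    (hw : w ≠ 0) (hN2 : 2 ∣ N) :
    (∃ u ≠ 0, (EperMat a lam N).mulVec u = w • u) →
    ∃ x ≠ 0, (Zmat a lam w N).mulVec x = x := by
  rintro ⟨u, hu, hE⟩
  set v := (MperMat a lam N).mulVec u with hv
  have hL : (LperMat a lam N).mulVec v = w • u := by
    rw [hv, Matrix.mulVec_mulVec]
    exact hE
  have hiter := iter_fwd ha hl hw hN2 u v hL hv.symm
  refine ⟨![u 0, v 0], ?_, ?_⟩
  · intro hx0
    apply hu
    funext k
    have hk : ((k.val : ℕ) : ZMod N) = k := ZMod.natCast_zmod_val k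
    have h1 := hiter k.val (le_of_lt (ZMod.val_lt k))
    rw [hx0, Matrix.mulVec_zero] at h1
    have h2 := congrFun h1 0
    simp only [Matrix.cons_val_zero, Pi.zero_apply] at h2
    rw [hk] at h2
    exact h2.symm
  · have h1 := hiter N (le_refl N)
    rw [ZMod.natCast_self] at h1
    exact h1

lemma bwd_dir (ha : ∀ m, ‖a m‖ < 1) (hl : ∀ m, ‖lam m‖ = 1)
    (hw : w ≠ 0) (hN2 : 2 ∣ N) :
    (∃ x ≠ 0, (Zmat a lam w N).mulVec x = x) →
    ∃ u ≠ 0, (EperMat a lam N).mulVec u = w • u := by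
  rintro ⟨x, hx, hZ⟩
  set y : ℕ → (Fin 2 → ℂ) := fun m => (Zmat a lam w m).mulVec x with hy
  set u : ZMod N → ℂ := fun k => y k.val 0 with hudef
  set v : ZMod N → ℂ := fun k => y k.val 1 with hvdef
  have hy0 : y 0 = x := Matrix.one_mulVec x
  have hident : ∀ m, m ≤ N → y m = ![u (m : ZMod N), v (m : ZMod N)] := by
    intro m hm
    rcases lt_or_eq_of_le hm with hlt | heq
    · have hval : ((m : ZMod N)).val = m := ZMod.val_cast_of_lt hlt
      funext i
      fin_cases i
      · show y m 0 = ![u (m : ZMod N), v (m : ZMod N)] 0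
        simp only [Matrix.cons_val_zero, hudef, hval]
      · show y m 1 = ![u (m : ZMod N), v (m : ZMod N)] 1
        simp only [Matrix.cons_val_one, Matrix.head_cons, hvdef, hval, Matrix.cons_val_zero]
    · have hyN : y m = x := by rw [heq]; exact hZ
      have h0 : ((m : ℕ) : ZMod N) = 0 := by rw [heq]; exact ZMod.natCast_self N
      rw [hyN, h0]
      have hu0 : u 0 = x 0 := by rw [hudef]; simp [ZMod.val_zero, hy0]
      have hv0 : v 0 = x 1 := by rw [hvdef]; simp [ZMod.val_zero, hy0]
      funext i
      fin_cases i
      · simp [hu0]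
      · simp [hv0]
  have hstep : ∀ m : ℕ, y (m + 1) = (Ymat a lam w (m : ℤ)).mulVec (y m) := by
    intro m
    show (Ymat a lam w (m : ℤ) * Zmat a lam w m).mulVec x = _
    rw [← Matrix.mulVec_mulVec]
  have key_even : ∀ j, j < N / 2 →
      (lam (2 * (j : ℤ)) * (starRingEnd ℂ) (a (2 * (j : ℤ))) * v ((2 * j : ℕ) : ZMod N) +
        lam (2 * (j : ℤ)) * (rho (a (2 * (j : ℤ))) : ℂ) * v ((2 * j + 1 : ℕ) : ZMod N) =
        w * u ((2 * j : ℕ) : ZMod N)) ∧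
      (lam (2 * (j : ℤ)) * (rho (a (2 * (j : ℤ))) : ℂ) * v ((2 * j : ℕ) : ZMod N) -
        lam (2 * (j : ℤ)) * a (2 * (j : ℤ)) * v ((2 * j + 1 : ℕ) : ZMod N) =
        w * u ((2 * j + 1 : ℕ) : ZMod N)) := by
    intro j hj
    have hlt := two_mul_lt hN2 hj
    have hs := hstep (2 * j)
    rw [hident (2 * j) (by omega), hident (2 * j + 1) (by omega),
      Ymat_cast_even, Qmat_mulVec] at hs
    have q0 := congrFun hs 0
    have q1 := congrFun hs 1
    simp only [Matrix.cons_val_zero, Matrix.cons_val_one, Matrix.head_cons] at q0 q1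
    exact (Qstep_iff (ha _) (hlam_ne hl _) hw).mp ⟨q0, q1⟩
  have key_odd : ∀ j, j < N / 2 →
      (lam (2 * (j : ℤ) + 1) * (starRingEnd ℂ) (a (2 * (j : ℤ) + 1)) *
          u ((2 * j + 1 : ℕ) : ZMod N) +
        lam (2 * (j : ℤ) + 1) * (rho (a (2 * (j : ℤ) + 1)) : ℂ) *
          u ((2 * j + 2 : ℕ) : ZMod N) =
        v ((2 * j + 1 : ℕ) : ZMod N)) ∧
      (lam (2 * (j : ℤ) + 1) * (rho (a (2 * (j : ℤ) + 1)) : ℂ) *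
          u ((2 * j + 1 : ℕ) : ZMod N) -
        lam (2 * (j : ℤ) + 1) * a (2 * (j : ℤ) + 1) * u ((2 * j + 2 : ℕ) : ZMod N) =
        v ((2 * j + 2 : ℕ) : ZMod N)) := by
    intro j hj
    have hlt := two_mul_lt hN2 hj
    have hs := hstep (2 * j + 1)
    rw [show 2 * j + 1 + 1 = 2 * j + 2 from by omega] at hs
    rw [hident (2 * j + 1) (by omega), hident (2 * j + 2) (by omega),
      Ymat_cast_odd, Pmat_mulVec] at hs
    have q0 := congrFun hs 0
    have q1 := congrFun hs 1
    simp only [Matrix.cons_val_zero, Matrix.cons_val_one, Matrix.head_cons] at q0 q1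
    exact (Pstep_iff (ha _) (hlam_ne hl _)).mp ⟨q0, q1⟩
  have hM : (MperMat a lam N).mulVec u = v := by
    funext k
    have hk : ((k.val : ℕ) : ZMod N) = k := ZMod.natCast_zmod_val k
    have hkval := ZMod.val_lt k
    rcases Nat.even_or_odd k.val with he | ho
    · obtain ⟨j, hj, hkk⟩ : ∃ j, j < N / 2 ∧ ((2 * j + 2 : ℕ) : ZMod N) = k := by
        obtain ⟨t, ht⟩ := he
        rcases Nat.eq_zero_or_pos t with rfl | hpos
        · have hN0 : 0 < N := Nat.pos_of_ne_zero (NeZero.ne N)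
          have hN2' : 2 ≤ N := by obtain ⟨s, rfl⟩ := hN2; omega
          refine ⟨N / 2 - 1, by omega, ?_⟩
          have h2 : 2 * (N / 2 - 1) + 2 = N := by obtain ⟨s, rfl⟩ := hN2; omega
          rw [h2, ZMod.natCast_self]
          have : k.val = 0 := by omega
          rw [← hk, this]
          simp
        · refine ⟨t - 1, by obtain ⟨s, rfl⟩ := hN2; omega, ?_⟩
          rw [show 2 * (t - 1) + 2 = k.val from by omega, hk]
      rw [← hkk, M_apply2 a lam hN2 u hj]
      linear_combination (key_odd j hj).2
    · obtain ⟨t, ht⟩ := ho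
      have hj : t < N / 2 := by obtain ⟨s, rfl⟩ := hN2; omega
      have hkk : ((2 * t + 1 : ℕ) : ZMod N) = k := by rw [← ht, hk]
      rw [← hkk, M_apply1 a lam hN2 u hj]
      exact (key_odd t hj).1
  have hL : (LperMat a lam N).mulVec v = w • u := by
    funext k
    have hk : ((k.val : ℕ) : ZMod N) = k := ZMod.natCast_zmod_val k
    have hkval := ZMod.val_lt k
    simp only [Pi.smul_apply, smul_eq_mul]
    rcases Nat.even_or_odd k.val with he | ho
    · obtain ⟨t, ht⟩ := he
      have hj : t < N / 2 := by obtain ⟨s, rfl⟩ := hN2; omega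
      have hkk : ((2 * t : ℕ) : ZMod N) = k := by rw [show 2 * t = k.val from by omega, hk]
      rw [← hkk, L_apply0 a lam hN2 v hj]
      exact (key_even t hj).1
    · obtain ⟨t, ht⟩ := ho
      have hj : t < N / 2 := by obtain ⟨s, rfl⟩ := hN2; omega
      have hkk : ((2 * t + 1 : ℕ) : ZMod N) = k := by rw [← ht, hk]
      rw [← hkk, L_apply1 a lam hN2 v hj]
      linear_combination (key_even t hj).2
  refine ⟨u, ?_, ?_⟩
  · intro hu0
    apply hx
    have hv0 : v = 0 := by rw [← hM, hu0, Matrix.mulVec_zero]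
    have h1 := hident 0 (Nat.zero_le N)
    rw [hy0, hu0, hv0] at h1
    funext i
    rw [h1]
    simp only [Nat.cast_zero, Pi.zero_apply]
    fin_cases i <;> simp
  · show (LperMat a lam N * MperMat a lam N).mulVec u = w • u
    rw [← Matrix.mulVec_mulVec, hM]
    exact hL

end corr
/-- eigenvalues of periodic truncations. For (α,λ) q-periodic (q even)
and N = nq, a nonzero w is an eigenvalue of ℰ^per_N iff 1 is an eigenvalue of Φ(w)ⁿ,
iff Δ(w) = 2cos(2πj/n) for some integer 0 ≤ j ≤ n/2. -/
theorem periodic_truncation_eigenvalues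
    (q : ℕ) (hq : Even q) (hq0 : 0 < q) (a lam : ℤ → ℂ)
    (ha : ∀ m, ‖a m‖ < 1) (hl : ∀ m, ‖lam m‖ = 1)
    (hper : ∀ m : ℤ, a (m + q) = a m ∧ lam (m + q) = lam m)
    (n : ℕ) (hn : 0 < n) [NeZero (n * q)]
    (w : ℂ) (hw : w ≠ 0) :
    (w ∈ spectrum ℂ (EperMat a lam (n * q)) ↔
      (1 : ℂ) ∈ spectrum ℂ (Zmat a lam w q ^ n)) ∧
    (w ∈ spectrum ℂ (EperMat a lam (n * q)) ↔
      ∃ j : ℕ, 2 * j ≤ n ∧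
        (Zmat a lam w q).trace =
          Complex.ofReal (2 * Real.cos (2 * Real.pi * j / n))) := by
  have hN2 : 2 ∣ (n * q) := Dvd.dvd.mul_left hq.two_dvd n
  have hΦn : Zmat a lam w (n * q) = (Zmat a lam w q) ^ n := Zmat_mul_q q a lam w hq hper n
  have hdet : (Zmat a lam w q).det = 1 := by
    rw [det_Zmat a lam w ha hl hw q]
    exact hq.neg_one_pow
  have hmain : w ∈ spectrum ℂ (EperMat a lam (n * q)) ↔
      (1 : ℂ) ∈ spectrum ℂ (Zmat a lam w q ^ n) := by
    rw [mem_spectrum_matrix, mem_spectrum_matrix, ← hΦn]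
    constructor
    · intro h
      obtain ⟨x, hx, hZx⟩ := fwd_dir ha hl hw hN2 h
      exact ⟨x, hx, by rw [hZx, one_smul]⟩
    · rintro ⟨x, hx, hZx⟩
      rw [one_smul] at hZx
      exact bwd_dir ha hl hw hN2 ⟨x, hx, hZx⟩
  refine ⟨hmain, ?_⟩
  rw [hmain, spec_pow_one_iff _ hdet hn]
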